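/- Let $N \ge 1$ and for $1 \le k \le N$ let $u_{k,N} : [0,\infty) \to [0,\infty)$ be continuous functions satisfying $u_{k,N}(t) \le k \int_0^t \big(1 + \sum_{l=k+1}^{N} u_{l,N}(s)\big)\, ds$ for all $t \ge 0$. Then for every $2 \le k \le N$ and $t \ge 0$, $1 + \sum_{l=k}^{N} u_{l,N}(t) \le \sum_{m=0}^{N-k+1} \binom{N}{m}\binom{N-k+1}{m} t^m$. -/

import Mathlib

theorem finite_section_induction_bound
    (N : ℕ) (hN : 1 ≤ N) (u : ℕ → ℝ → ℝ)
    (hcont : ∀ k, 1 ≤ k → k ≤ N → Continuous (u k))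
    (hnonneg : ∀ k, 1 ≤ k → k ≤ N → ∀ t, 0 ≤ t → 0 ≤ u k t)
    (hineq : ∀ k, 1 ≤ k → k ≤ N → ∀ t, 0 ≤ t →
      u k t ≤ (k : ℝ) * ∫ s in (0:ℝ)..t, (1 + ∑ l ∈ Finset.Icc (k+1) N, u l s)) :
    ∀ k, 2 ≤ k → k ≤ N → ∀ t : ℝ, 0 ≤ t →
      1 + ∑ l ∈ Finset.Icc k N, u l t ≤
        ∑ m ∈ Finset.range (N - k + 2),
          (N.choose m : ℝ) * ((N - k + 1).choose m : ℝ) * t ^ m := by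
  -- continuity of the integrand
  have hfcont : ∀ k : ℕ, Continuous (fun s => 1 + ∑ l ∈ Finset.Icc (k+1) N, u l s) := by
    intro k
    apply continuous_const.add
    apply continuous_finset_sum
    intro l hl
    rw [Finset.mem_Icc] at hl
    exact hcont l (by omega) hl.2
  have main : ∀ j : ℕ, ∀ k, 2 ≤ k → k ≤ N → N - k = j → ∀ t : ℝ, 0 ≤ t →
      1 + ∑ l ∈ Finset.Icc k N, u l t ≤
        ∑ m ∈ Finset.range (N - k + 2),
          (N.choose m : ℝ) * ((N - k + 1).choose m : ℝ) * t ^ m := by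
    intro j
    induction j with
    | zero =>
      intro k hk2 hkN hj t ht
      have hkN' : k = N := by omega
      subst hkN'
      have h1 : Finset.Icc (k+1) k = (∅ : Finset ℕ) := Finset.Icc_eq_empty (by omega)
      have h2 := hineq k (by omega) le_rfl t ht
      rw [h1] at h2
      simp only [Finset.sum_empty, add_zero, intervalIntegral.integral_const, smul_eq_mul,
        mul_one, sub_zero] at h2
      simp only [Finset.Icc_self, Finset.sum_singleton, Nat.sub_self]
      rw [Finset.sum_range_succ, Finset.sum_range_succ, Finset.sum_range_zero]
      simp only [Nat.choose_zero_right, Nat.choose_one_right, Nat.choose_self]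
      push_cast
      nlinarith
    | succ j ih =>
      intro k hk2 hkN hj t ht
      have hkN' : k < N := by omega
      have hjk : N - (k+1) = j := by omega
      -- IH for k+1
      have IH : ∀ s : ℝ, 0 ≤ s →
          1 + ∑ l ∈ Finset.Icc (k+1) N, u l s ≤
            ∑ m ∈ Finset.range (j + 2),
              (N.choose m : ℝ) * ((j+1).choose m : ℝ) * s ^ m := by
        intro s hs
        have := ih (k+1) (by omega) (by omega) hjk s hs
        rw [hjk] at this
        exact this
      -- bound u k t by the integral of the polynomial
      set P : ℝ → ℝ := fun s => ∑ m ∈ Finset.range (j + 2),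
          (N.choose m : ℝ) * ((j+1).choose m : ℝ) * s ^ m with hP
      have hPcont : Continuous P := by
        apply continuous_finset_sum
        intro m _
        exact continuous_const.mul (continuous_pow m)
      have hintmono : (∫ s in (0:ℝ)..t, (1 + ∑ l ∈ Finset.Icc (k+1) N, u l s)) ≤
          ∫ s in (0:ℝ)..t, P s := by
        apply intervalIntegral.integral_mono_on ht
        · exact (hfcont k).intervalIntegrable 0 t
        · exact hPcont.intervalIntegrable 0 t
        · intro s hs
          exact IH s hs.1
      have hintP : (∫ s in (0:ℝ)..t, P s) =
          ∑ m ∈ Finset.range (j + 2),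
            (N.choose m : ℝ) * ((j+1).choose m : ℝ) * (t ^ (m+1) / (m+1)) := by
        rw [hP]
        rw [intervalIntegral.integral_finset_sum]
        · apply Finset.sum_congr rfl
          intro m _
          rw [intervalIntegral.integral_const_mul, integral_pow]
          simp [zero_pow]
        · intro m _
          exact (continuous_const.mul (continuous_pow m)).intervalIntegrable 0 t
      have huk : u k t ≤ (k : ℝ) * ∑ m ∈ Finset.range (j + 2),
            (N.choose m : ℝ) * ((j+1).choose m : ℝ) * (t ^ (m+1) / (m+1)) := by
        have h1 := hineq k (by omega) (by omega) t ht
        calc u k t ≤ (k : ℝ) * ∫ s in (0:ℝ)..t, (1 + ∑ l ∈ Finset.Icc (k+1) N, u l s) := h1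
          _ ≤ (k : ℝ) * ∫ s in (0:ℝ)..t, P s := by
              apply mul_le_mul_of_nonneg_left hintmono (by positivity)
          _ = _ := by rw [hintP]
      -- split the sum at the bottom
      have hins : Finset.Icc k N = insert k (Finset.Icc (k+1) N) := by
        rw [Finset.Icc_add_one_left_eq_Ioc, Finset.Ioc_insert_left (by omega : k ≤ N)]
      rw [hins, Finset.sum_insert (by simp [Finset.Icc_add_one_left_eq_Ioc])]
      have hsplit : 1 + (u k t + ∑ l ∈ Finset.Icc (k+1) N, u l t) =
          u k t + (1 + ∑ l ∈ Finset.Icc (k+1) N, u l t) := by ring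
      rw [hsplit]
      have hNk : N - k = j + 1 := hj
      rw [hNk]
      -- final algebraic inequality
      have key : (k : ℝ) * (∑ m ∈ Finset.range (j + 2),
            (N.choose m : ℝ) * ((j+1).choose m : ℝ) * (t ^ (m+1) / (m+1)))
          + ∑ m ∈ Finset.range (j + 2), (N.choose m : ℝ) * ((j+1).choose m : ℝ) * t ^ m
          ≤ ∑ m ∈ Finset.range (j + 1 + 2),
            (N.choose m : ℝ) * ((j + 1 + 1).choose m : ℝ) * t ^ m := by
        -- RHS: peel off m = 0 and use Pascal
        have hRHS : ∑ m ∈ Finset.range (j + 3),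
            (N.choose m : ℝ) * ((j + 2).choose m : ℝ) * t ^ m
            = 1 + ∑ m ∈ Finset.range (j + 2),
              ((N.choose (m+1) : ℝ) * ((j+1).choose m : ℝ) * t ^ (m+1)
               + (N.choose (m+1) : ℝ) * ((j+1).choose (m+1) : ℝ) * t ^ (m+1)) := by
          rw [Finset.sum_range_succ' _ (j+2)]
          simp only [Nat.choose_zero_right, Nat.cast_one, mul_one, one_mul, pow_zero]
          rw [add_comm]
          congr 1
          apply Finset.sum_congr rfl
          intro m _
          rw [Nat.choose_succ_succ (j+1) m]
          push_cast
          ring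
        have hLHS2 : ∑ m ∈ Finset.range (j + 2),
            (N.choose m : ℝ) * ((j+1).choose m : ℝ) * t ^ m
            = 1 + ∑ m ∈ Finset.range (j + 2),
              (N.choose (m+1) : ℝ) * ((j+1).choose (m+1) : ℝ) * t ^ (m+1) := by
          rw [Finset.sum_range_succ' _ (j+1)]
          simp only [Nat.choose_zero_right, Nat.cast_one, mul_one, one_mul, pow_zero]
          rw [add_comm]
          congr 1
          rw [Finset.sum_range_succ _ (j+1)]
          have : (j+1).choose (j+1+1) = 0 := Nat.choose_eq_zero_of_lt (by omega)
          rw [this]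
          push_cast
          ring
        have hj3 : j + 1 + 2 = j + 3 := by ring
        have hj2 : j + 1 + 1 = j + 2 := by ring
        rw [hj3, hj2, hRHS, hLHS2, Finset.sum_add_distrib]
        rw [Finset.mul_sum]
        have hterm : ∀ m ∈ Finset.range (j + 2),
            (k : ℝ) * ((N.choose m : ℝ) * ((j+1).choose m : ℝ) * (t ^ (m+1) / (m+1)))
            ≤ (N.choose (m+1) : ℝ) * ((j+1).choose m : ℝ) * t ^ (m+1) := by
          intro m hm
          rw [Finset.mem_range] at hm
          have hmN : m ≤ N - k := by omega
          have hnat : k * N.choose m ≤ N.choose (m+1) * (m+1) := by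
            have h := Nat.choose_succ_right_eq N m
            have hk' : k ≤ N - m := by omega
            calc k * N.choose m ≤ (N - m) * N.choose m :=
                  Nat.mul_le_mul_right _ hk'
              _ = N.choose m * (N - m) := Nat.mul_comm _ _
              _ = N.choose (m+1) * (m+1) := h.symm
          have hnatR : (k : ℝ) * (N.choose m : ℝ) ≤ (N.choose (m+1) : ℝ) * ((m:ℝ)+1) := by
            exact_mod_cast hnat
          have hm1 : (0:ℝ) < (m:ℝ) + 1 := by positivity
          have hcjt : (0:ℝ) ≤ ((j+1).choose m : ℝ) * t ^ (m+1) := by positivity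
          rw [show (k : ℝ) * ((N.choose m : ℝ) * ((j+1).choose m : ℝ) * (t ^ (m+1) / (m+1)))
              = ((k : ℝ) * (N.choose m : ℝ)) * (((j+1).choose m : ℝ) * t ^ (m+1)) / ((m:ℝ)+1)
              by ring]
          rw [div_le_iff₀ hm1]
          calc ((k : ℝ) * (N.choose m : ℝ)) * (((j+1).choose m : ℝ) * t ^ (m+1))
              ≤ ((N.choose (m+1) : ℝ) * ((m:ℝ)+1)) * (((j+1).choose m : ℝ) * t ^ (m+1)) :=
                mul_le_mul_of_nonneg_right hnatR hcjt
            _ = (N.choose (m+1) : ℝ) * ((j+1).choose m : ℝ) * t ^ (m+1) * ((m:ℝ)+1) := by ring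
        have hsum1 := Finset.sum_le_sum hterm
        linarith [hsum1]
      calc u k t + (1 + ∑ l ∈ Finset.Icc (k+1) N, u l t)
          ≤ (k : ℝ) * (∑ m ∈ Finset.range (j + 2),
              (N.choose m : ℝ) * ((j+1).choose m : ℝ) * (t ^ (m+1) / (m+1)))
            + ∑ m ∈ Finset.range (j + 2), (N.choose m : ℝ) * ((j+1).choose m : ℝ) * t ^ m :=
            add_le_add huk (IH t ht)
        _ ≤ _ := key
  intro k hk2 hkN t ht
  exact main (N - k) k hk2 hkN rfl t ht
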